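/- For any subshift Y in the space 𝐒 of all subshifts, the collection 𝐒(Y) of all subshifts contained in Y is a compact subset of 𝐒; moreover, if Y is a shift of finite type, then 𝐒(Y) is also open in 𝐒. -/

import Mathlib

open Set Topology Filter

namespace Generic

/-- The shift map `σ` on `ℤ → ℤ`, `(σ x) i = x (i+1)`. -/
def shift : (ℤ → ℤ) → (ℤ → ℤ) := fun x i => x (i + 1)

/-- A subshift: a nonempty compact shift-invariant subset of `𝒜^ℤ`
for some finite alphabet `𝒜 ⊂ ℤ` (product topology, `ℤ` discrete). -/
structure Subshift where
  carrier : Set (ℤ → ℤ)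
  nonempty' : carrier.Nonempty
  finite_alphabet : ∃ A : Finset ℤ, ∀ x ∈ carrier, ∀ i : ℤ, x i ∈ A
  shift_invariant : shift '' carrier = carrier
  isCompact' : IsCompact carrier

/-- The finite word `w` occurs in the biinfinite sequence `x`. -/
def Occurs (w : List ℤ) (x : ℤ → ℤ) : Prop :=
  ∃ k : ℤ, ∀ i : Fin w.length, x (k + (i.1 : ℤ)) = w.get i

namespace Subshift

/-- `L_n(X)`: the set of `n`-letter words appearing in points of `X`. -/
def lang (X : Subshift) (n : ℕ) : Set (List ℤ) :=
  {w | w.length = n ∧ ∃ x ∈ X.carrier, ∀ i : Fin w.length, x (i.1 : ℤ) = w.get i}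

/-- The word complexity function `c_X(n) = |L_n(X)|`. -/
noncomputable def complexity (X : Subshift) (n : ℕ) : ℕ := (X.lang n).ncard

/-- `X` is a shift of finite type: for some finite alphabet `A` and finite set `F` of
forbidden words, `X` is the set of all points of `A^ℤ` containing no word of `F`. -/
def IsSFT (X : Subshift) : Prop :=
  ∃ (A : Finset ℤ) (F : Finset (List ℤ)),
    X.carrier = {x | (∀ i : ℤ, x i ∈ A) ∧ ∀ w ∈ F, ¬ Occurs w x}

end Subshift

/-- The cylinder set `[X, n] = {Y : L_n(Y) = L_n(X)}`. -/
def cylinder (X : Subshift) (n : ℕ) : Set Subshift := {Y | Y.lang n = X.lang n}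

/-- The topology of the space `𝐒` of all subshifts: generated by the cylinder sets `[X,n]`;
this is the topology of the metric `d(X,Y) = 2^{-inf{n : L_n(X) ≠ L_n(Y)}}`. -/
instance : TopologicalSpace Subshift :=
  TopologicalSpace.generateFrom {C | ∃ (X : Subshift) (n : ℕ), C = cylinder X n}

/-- A directed (multi)graph: edge set `E`, vertex set `V`, source and target maps. -/
structure Digraph (V : Type*) (E : Type*) where
  src : E → V
  tgt : E → V

namespace Digraph

variable {V E : Type*}

/-- A cycle of length `k`, encoded as a map `ZMod k → E` with matching endpoints. -/
def IsCycle (G : Digraph V E) {k : ℕ} (c : ZMod k → E) : Prop :=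
  0 < k ∧ ∀ i, G.tgt (c i) = G.src (c (i + 1))

/-- The vertex set of a cycle. -/
def cycleVerts (G : Digraph V E) {k : ℕ} (c : ZMod k → E) : Set V :=
  Set.range fun i => G.src (c i)

/-- The cycle `c` has an incoming edge: an edge whose terminal vertex is on the cycle
and whose initial vertex is not. -/
def HasIncoming (G : Digraph V E) {k : ℕ} (c : ZMod k → E) : Prop :=
  ∃ f : E, G.tgt f ∈ G.cycleVerts c ∧ G.src f ∉ G.cycleVerts c

/-- The cycle `c` has an outgoing edge: an edge whose initial vertex is on the cycle
and whose terminal vertex is not. -/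
def HasOutgoing (G : Digraph V E) {k : ℕ} (c : ZMod k → E) : Prop :=
  ∃ g : E, G.src g ∈ G.cycleVerts c ∧ G.tgt g ∉ G.cycleVerts c

/-- No middle cycles property: no cycle has both an incoming and an outgoing edge. -/
def NMC (G : Digraph V E) : Prop :=
  ¬ ∃ (k : ℕ) (c : ZMod k → E), G.IsCycle c ∧ G.HasIncoming c ∧ G.HasOutgoing c

/-- A simple cycle: a cycle visiting no vertex twice. -/
def IsSimpleCycle (G : Digraph V E) {k : ℕ} (c : ZMod k → E) : Prop :=
  G.IsCycle c ∧ Function.Injective fun i => G.src (c i)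

/-- One middle cycle property: there is a unique simple cycle having both an incoming
and an outgoing edge. -/
def OMC (G : Digraph V E) : Prop :=
  ∃ (k : ℕ) (c : ZMod k → E), G.IsSimpleCycle c ∧ G.HasIncoming c ∧ G.HasOutgoing c ∧
    ∀ (k' : ℕ) (c' : ZMod k' → E), G.IsSimpleCycle c' → G.HasIncoming c' → G.HasOutgoing c' →
      Set.range c' = Set.range c

end Digraph

/-- The `n`-th Rauzy graph of `X`: vertices are the `(n-1)`-letter words of `L(X)`
(embedded in `List ℤ`), edges are the `n`-letter words `w ∈ L_n(X)`, with
`src w` the length-`(n-1)` prefix and `tgt w` the length-`(n-1)` suffix. -/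
def rauzyGraph (X : Subshift) (n : ℕ) : Digraph (List ℤ) (X.lang n) :=
  ⟨fun w => w.1.dropLast, fun w => w.1.tail⟩

/-- `X` has the no middle cycles property. -/
def Subshift.IsNMC (X : Subshift) : Prop := ∃ n : ℕ, 1 ≤ n ∧ (rauzyGraph X n).NMC

/-- `X` has the one middle cycle property. -/
def Subshift.IsOMC (X : Subshift) : Prop := ∃ n : ℕ, 1 ≤ n ∧ (rauzyGraph X n).OMC

/-- The set of NMC subshifts. -/
def NMCset : Set Subshift := {X | X.IsNMC}

/-- The set of OMC subshifts. -/
def OMCset : Set Subshift := {X | X.IsOMC}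

/-- `𝐒'`: the complement of the set of NMC subshifts. -/
def Sprime : Set Subshift := NMCsetᶜ

/-- The shift of a point by `k`: `(σ^k x) i = x (i + k)`. -/
def shiftBy (k : ℤ) (x : ℤ → ℤ) : ℤ → ℤ := fun i => x (i + k)

/-- The orbit `{σ^k x : k ∈ ℤ}` of a point. -/
def orbitOf (x : ℤ → ℤ) : Set (ℤ → ℤ) := {y | ∃ k : ℤ, y = shiftBy k x}

/-- `X` is (topologically) transitive: some point has dense orbit. -/
def Subshift.IsTransitive (X : Subshift) : Prop :=
  ∃ x ∈ X.carrier, X.carrier ⊆ closure (orbitOf x)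

/-- `X` is totally transitive: for every `k ≥ 1` some point has dense `σ^k`-orbit. -/
def Subshift.IsTotallyTransitive (X : Subshift) : Prop :=
  ∀ k : ℕ, 1 ≤ k → ∃ x ∈ X.carrier,
    X.carrier ⊆ closure {y | ∃ m : ℤ, y = shiftBy (m * k) x}

/-- `𝒯'`: the set of infinite transitive subshifts. -/
def Tprime : Set Subshift := {X | X.IsTransitive ∧ X.carrier.Infinite}

/-- `𝒯𝒯'`: the set of infinite totally transitive subshifts. -/
def TTprime : Set Subshift := {X | X.IsTotallyTransitive ∧ X.carrier.Infinite}

/-- `X` is minimal: every word of the language occurs in every point. -/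
def Subshift.IsMinimal (X : Subshift) : Prop :=
  ∀ n : ℕ, ∀ w ∈ X.lang n, ∀ x ∈ X.carrier, Occurs w x

/-- `X` has a periodic point. -/
def Subshift.HasPeriodicPoint (X : Subshift) : Prop :=
  ∃ x ∈ X.carrier, ∃ k : ℕ, 1 ≤ k ∧ ∀ i : ℤ, x (i + k) = x i

/-- `X` is topologically mixing. -/
def Subshift.IsMixing (X : Subshift) : Prop :=
  ∀ (nv nw : ℕ), ∀ v ∈ X.lang nv, ∀ w ∈ X.lang nw, ∃ N : ℕ, ∀ n : ℕ, N < n →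
    ∃ x ∈ X.carrier, (∀ i : Fin v.length, x (i.1 : ℤ) = v.get i) ∧
      ∀ i : Fin w.length, x ((n : ℤ) + (i.1 : ℤ)) = w.get i

lemma Subshift.shift_mem (X : Subshift) {x : ℤ → ℤ} (hx : x ∈ X.carrier) :
    shift x ∈ X.carrier :=
  X.shift_invariant ▸ Set.mem_image_of_mem shift hx

/-- The restriction of the shift map to `X`. -/
def Subshift.restrictShift (X : Subshift) : ↥X.carrier → ↥X.carrier :=
  fun x => ⟨shift x.1, X.shift_mem x.2⟩

/-- Topological conjugacy of subshifts. -/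
def Conjugate (X Y : Subshift) : Prop :=
  ∃ φ : ↥X.carrier ≃ₜ ↥Y.carrier, ∀ x, φ (X.restrictShift x) = Y.restrictShift (φ x)

/-- `lam` is a topological eigenvalue of `(X, σ)`. -/
def Subshift.IsTopEigenvalue (X : Subshift) (lam : ℂ) : Prop :=
  ∃ f : ↥X.carrier → ℂ, Continuous f ∧ (∃ x, f x ≠ 0) ∧
    ∀ x, f (X.restrictShift x) = lam * f x

/-- A regular Toeplitz sequence. -/
def IsRegularToeplitz (x : ℤ → ℤ) : Prop :=
  ∀ ε : ℝ, 0 < ε → ∃ n : ℕ, 0 < n ∧ ∃ S : Finset ℕ, S ⊆ Finset.range n ∧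
    (1 - ε) * (n : ℝ) < (S.card : ℝ) ∧
    ∀ s ∈ S, ∀ i j : ℤ, x ((s : ℤ) + i * (n : ℤ)) = x ((s : ℤ) + j * (n : ℤ))

/-- A regular Toeplitz subshift: the orbit closure of a regular Toeplitz sequence. -/
def Subshift.IsRegularToeplitzSubshift (X : Subshift) : Prop :=
  ∃ x : ℤ → ℤ, IsRegularToeplitz x ∧ X.carrier = closure (orbitOf x)

/-- `X` is the disjoint union of `σ^i E`, `0 ≤ i < n`, for some clopen `E`. -/
def Subshift.HasCyclicPartition (X : Subshift) (n : ℕ) : Prop :=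
  ∃ E : Set ↥X.carrier, IsClopen E ∧
    (⋃ i ∈ Finset.range n, X.restrictShift^[i] '' E) = Set.univ ∧
    ∀ i j : ℕ, i < n → j < n → i ≠ j →
      Disjoint (X.restrictShift^[i] '' E) (X.restrictShift^[j] '' E)

/-- The biinfinite periodic point `p^∞` (with `p` occupying positions `[0, |p|)` and
repeating in both directions). -/
def perPoint (p : List ℤ) : ℤ → ℤ :=
  fun i => p.getD (Int.emod i (p.length : ℤ)).toNat 0

/-- The point `p^∞ m s^∞`: a left-infinite repetition of `p` (ending at position `-1`),
then `m` on `[0, |m|)`, then a right-infinite repetition of `s`. -/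
def barbellPoint (p m s : List ℤ) : ℤ → ℤ := fun i =>
  if i < 0 then perPoint p i
  else if i < (m.length : ℤ) then m.getD i.toNat 0
  else perPoint s (i - (m.length : ℤ))

/-- `𝐒(Y)`: the subshifts contained in `Y`. -/
def SubshiftsOf (Y : Subshift) : Set Subshift := {X | X.carrier ⊆ Y.carrier}

/-- `τ(y)`: the biinfinite concatenation `⋯ t(y₋₁).t(y₀) t(y₁) ⋯` of blocks of length `ℓ`. -/
def tauPoint (t : ℤ → List ℤ) (ℓ : ℕ) (y : ℤ → ℤ) : ℤ → ℤ :=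
  fun j => (t (y (Int.ediv j (ℓ : ℤ)))).getD (Int.emod j (ℓ : ℤ)).toNat 0

/-- `τ*(Y) = {σ^i τ(y) : y ∈ Y, 0 ≤ i < ℓ}`. -/
def tauStar (t : ℤ → List ℤ) (ℓ : ℕ) (Y : Subshift) : Set (ℤ → ℤ) :=
  {z | ∃ y ∈ Y.carrier, ∃ i : ℕ, i < ℓ ∧ z = fun j => tauPoint t ℓ y (j + (i : ℤ))}

/-- `τ(v)` for a finite word `v`: the concatenation of the blocks. -/
def tauWord (t : ℤ → List ℤ) (v : List ℤ) : List ℤ := (v.map t).flatten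

/-- The set of `σ`-orbits of `X`. -/
def Subshift.orbitSet (X : Subshift) : Set (Set (ℤ → ℤ)) :=
  {O | ∃ x ∈ X.carrier, O = orbitOf x}


def window (x : ℤ → ℤ) (k : ℤ) (n : ℕ) : List ℤ := List.ofFn fun i : Fin n => x (k + i)

lemma window_length (x : ℤ → ℤ) (k : ℤ) (n : ℕ) : (window x k n).length = n :=
  List.length_ofFn

lemma window_get (x : ℤ → ℤ) (k : ℤ) (n : ℕ) (i : Fin (window x k n).length) :
    (window x k n).get i = x (k + (i : ℕ)) := by
  rw [List.get_eq_getElem]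
  simp [window, List.getElem_ofFn]

lemma Subshift.shiftBy_mem (X : Subshift) (k : ℤ) {x : ℤ → ℤ} (hx : x ∈ X.carrier) :
    shiftBy k x ∈ X.carrier := by
  induction k using Int.induction_on with
  | zero =>
      have : shiftBy 0 x = x := by funext i; simp [shiftBy]
      rw [this]; exact hx
  | succ k ih =>
      have : shiftBy ((k : ℤ) + 1) x = shift (shiftBy k x) := by
        funext i; simp [shiftBy, shift]; ring_nf
      rw [this]; exact X.shift_mem ih
  | pred k ih =>
      have hmem : shiftBy (-(k : ℤ)) x ∈ X.carrier := ih
      rw [← X.shift_invariant] at hmem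
      obtain ⟨y, hy, hyx⟩ := hmem
      have : shiftBy (-(k : ℤ) - 1) x = y := by
        funext i
        have := congrFun hyx (i - 1)
        simp only [shift, shiftBy, sub_add_cancel] at this
        show x (i + (-(k : ℤ) - 1)) = y i
        rw [show i + (-(k : ℤ) - 1) = i - 1 + -(k : ℤ) by ring]
        exact this.symm
      rw [this]; exact hy

lemma window_mem_lang (X : Subshift) {x : ℤ → ℤ} (hx : x ∈ X.carrier) (k : ℤ) (n : ℕ) :
    window x k n ∈ X.lang n := by
  refine ⟨window_length x k n, shiftBy k x, X.shiftBy_mem k hx, fun i => ?_⟩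
  rw [window_get]
  simp [shiftBy, add_comm]

lemma lang_mono {X Y : Subshift} (h : X.carrier ⊆ Y.carrier) (n : ℕ) :
    X.lang n ⊆ Y.lang n := fun w ⟨hl, x, hx, hm⟩ => ⟨hl, x, h hx, hm⟩

lemma length_of_mem_lang {X : Subshift} {n : ℕ} {w : List ℤ} (h : w ∈ X.lang n) :
    w.length = n := h.1

lemma lang_finite (X : Subshift) (n : ℕ) : (X.lang n).Finite := by
  obtain ⟨A, hA⟩ := X.finite_alphabet
  have hsub : X.lang n ⊆ List.ofFn '' {g : Fin n → ℤ | ∀ i, g i ∈ (A : Set ℤ)} := by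
    rintro w ⟨hl, x, hx, hm⟩
    refine ⟨fun i => w.get (Fin.cast hl.symm i), fun i => ?_, ?_⟩
    · show w.get (Fin.cast hl.symm i) ∈ (A : Set ℤ)
      rw [← hm (Fin.cast hl.symm i)]; exact hA x hx _
    · apply List.ext_get (by simp [hl])
      intro j h1 h2
      simp
  exact Set.Finite.subset (Set.Finite.image _ (by
    have : {g : Fin n → ℤ | ∀ i, g i ∈ (A : Set ℤ)} = Set.pi Set.univ (fun _ => (A : Set ℤ)) := by
      ext g; simp [Set.mem_pi]
    rw [this]
    exact Set.Finite.pi fun _ => A.finite_toSet)) hsub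

lemma isClosed_windowMem (n : ℕ) (k : ℤ) (W : Set (List ℤ)) :
    IsClosed {x : ℤ → ℤ | window x k n ∈ W} := by
  have : {x : ℤ → ℤ | window x k n ∈ W} =
      (fun x : ℤ → ℤ => fun i : Fin n => x (k + i)) ⁻¹' {g | List.ofFn g ∈ W} := rfl
  rw [this]
  exact (isClosed_discrete _).preimage (continuous_pi fun i => continuous_apply _)

lemma lang_window_elim {Y : Subshift} {n : ℕ} {k : ℤ} {z : ℤ → ℤ}
    (h : window z k n ∈ Y.lang n) :
    ∃ y ∈ Y.carrier, ∀ j : ℕ, j < n → y (j : ℤ) = z (k + j) := by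
  obtain ⟨hl, y, hy, hm⟩ := h
  refine ⟨y, hy, fun j hj => ?_⟩
  have := hm ⟨j, by rw [window_length]; exact hj⟩
  rw [window_get] at this
  simpa using this

lemma clusterPt_mem_closed {z : ℤ → ℤ} {F : Filter (ℤ → ℤ)} (hcp : ClusterPt z F)
    {T : Set (ℤ → ℤ)} (hT : IsClosed T) (hF : T ∈ F) : z ∈ T := by
  rw [← hT.closure_eq]
  exact mem_closure_iff_clusterPt.mpr (hcp.mono (le_principal_iff.mpr hF))

lemma mem_carrier_of_forall_window (Y : Subshift) (x : ℤ → ℤ)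
    (h : ∀ n : ℕ, ∀ k : ℤ, window x k n ∈ Y.lang n) : x ∈ Y.carrier := by
  have key : ∀ n : ℕ, ∃ y ∈ Y.carrier, ∀ i : ℤ, -(n : ℤ) ≤ i → i ≤ n → y i = x i := by
    intro n
    obtain ⟨y, hy, hm⟩ := lang_window_elim (h (2 * n + 1) (-(n : ℤ)))
    refine ⟨shiftBy (n : ℤ) y, Y.shiftBy_mem _ hy, fun i h1 h2 => ?_⟩
    have hnat : (0 : ℤ) ≤ i + n := by omega
    have hlt : (i + n).toNat < 2 * n + 1 := by omega
    have := hm (i + n).toNat hlt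
    rw [Int.toNat_of_nonneg hnat] at this
    show y (i + (n : ℤ)) = x i
    rw [this]; congr 1; omega
  choose y hy hmatch using key
  have hcl : x ∈ closure Y.carrier := by
    apply mem_closure_of_tendsto (f := y) (b := Filter.atTop)
    · rw [tendsto_pi_nhds]
      intro i
      apply Filter.Tendsto.congr' _ tendsto_const_nhds
      filter_upwards [Filter.eventually_ge_atTop i.natAbs] with n hn
      exact (hmatch n i (by omega) (by omega)).symm
    · exact Filter.Eventually.of_forall hy
  rwa [Y.isCompact'.isClosed.closure_eq] at hcl

lemma window_shiftBy (x : ℤ → ℤ) (a k : ℤ) (n : ℕ) :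
    window (shiftBy a x) k n = window x (k + a) n := by
  unfold window shiftBy
  congr 1; funext i; congr 1; ring

lemma window_eq_of_match {x : ℤ → ℤ} {w : List ℤ} {n : ℕ} (hl : w.length = n)
    (hm : ∀ i : Fin w.length, x (i.1 : ℤ) = w.get i) : window x 0 n = w := by
  apply List.ext_get (by simp [window_length, hl])
  intro j h1 h2
  rw [window_get x 0 n ⟨j, h1⟩, ← hm ⟨j, h2⟩]
  simp

lemma limit_subshift (Y : Subshift) (W : ℕ → Set (List ℤ))
    (hZ : ∀ N : ℕ, ∃ Z : Subshift, Z.carrier ⊆ Y.carrier ∧ ∀ j ≤ N, Z.lang j = W j) :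
    ∃ X : Subshift, X.carrier ⊆ Y.carrier ∧ ∀ n, X.lang n = W n := by
  have hWY : ∀ n, W n ⊆ Y.lang n := by
    intro n
    obtain ⟨Z, hZY, hZl⟩ := hZ n
    rw [← hZl n le_rfl]
    exact lang_mono hZY n
  set C : Set (ℤ → ℤ) := {x | ∀ n : ℕ, ∀ k : ℤ, window x k n ∈ W n} with hC
  have hCY : C ⊆ Y.carrier := fun x hx =>
    mem_carrier_of_forall_window Y x fun n k => hWY n (hx n k)
  -- realization of every word of W n by a point of C
  have realize : ∀ n : ℕ, ∀ w ∈ W n, ∃ z ∈ C, window z 0 n = w := by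
    intro n w hw
    have hζ : ∀ m : ℕ, ∃ z : ℤ → ℤ, z ∈ Y.carrier ∧ window z 0 n = w ∧
        ∀ j : ℕ, j ≤ n + m → ∀ k : ℤ, window z k j ∈ W j := by
      intro m
      obtain ⟨Z, hZY, hZl⟩ := hZ (n + m)
      have hwZ : w ∈ Z.lang n := by rw [hZl n (by omega)]; exact hw
      obtain ⟨hl, z, hz, hm⟩ := hwZ
      exact ⟨z, hZY hz, window_eq_of_match hl hm,
        fun j hj k => by rw [← hZl j hj]; exact window_mem_lang Z hz k j⟩
    choose ζ hζY hζw hζW using hζ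
    have hFle : Filter.map ζ Filter.atTop ≤ Filter.principal Y.carrier :=
      le_principal_iff.mpr (Filter.mem_map.mpr (Filter.Eventually.of_forall hζY))
    obtain ⟨z, hzY, hcp⟩ := Y.isCompact'.exists_clusterPt hFle
    refine ⟨z, ?_, ?_⟩
    · intro j k
      apply clusterPt_mem_closed hcp (isClosed_windowMem j k (W j))
      rw [Filter.mem_map]
      filter_upwards [Filter.eventually_ge_atTop j] with m hm
      exact hζW m j (by omega) k
    · have : z ∈ {x : ℤ → ℤ | window x 0 n ∈ ({w} : Set (List ℤ))} := by
        apply clusterPt_mem_closed hcp (isClosed_windowMem n 0 {w})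
        rw [Filter.mem_map]
        exact Filter.Eventually.of_forall fun m => hζw m
      exact this
  have hCclosed : IsClosed C := by
    have : C = ⋂ n : ℕ, ⋂ k : ℤ, {x : ℤ → ℤ | window x k n ∈ W n} := by
      ext x; simp [hC, Set.mem_iInter]
    rw [this]
    exact isClosed_iInter fun n => isClosed_iInter fun k => isClosed_windowMem n k (W n)
  have hCne : C.Nonempty := by
    obtain ⟨Z, hZY, hZl⟩ := hZ 0
    obtain ⟨z0, hz0⟩ := Z.nonempty'
    have : ([] : List ℤ) ∈ W 0 := by
      rw [← hZl 0 le_rfl]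
      exact ⟨rfl, z0, hz0, fun i => i.elim0⟩
    obtain ⟨z, hz, -⟩ := realize 0 [] this
    exact ⟨z, hz⟩
  have hshift : shift '' C = C := by
    apply Set.Subset.antisymm
    · rintro _ ⟨x, hx, rfl⟩
      intro n k
      have : window (shift x) k n = window x (k + 1) n := by
        have : shift x = shiftBy 1 x := by funext i; rfl
        rw [this, window_shiftBy]
      rw [this]; exact hx n (k + 1)
    · intro x hx
      refine ⟨shiftBy (-1) x, ?_, ?_⟩
      · intro n k
        rw [window_shiftBy]
        exact hx n (k + -1)
      · funext i
        show x (i + 1 + -1) = x i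
        congr 1; ring
  refine ⟨⟨C, hCne, ?_, hshift, Y.isCompact'.of_isClosed_subset hCclosed hCY⟩, hCY, ?_⟩
  · obtain ⟨A, hA⟩ := Y.finite_alphabet
    exact ⟨A, fun x hx i => hA x (hCY hx) i⟩
  · intro n
    apply Set.Subset.antisymm
    · rintro w ⟨hl, x, hx, hm⟩
      rw [← window_eq_of_match hl hm]
      exact hx n 0
    · intro w hw
      obtain ⟨z, hz, hzw⟩ := realize n w hw
      rw [← hzw]
      exact window_mem_lang _ hz 0 n


/-- For any subshift `Y` in the space `𝐒` of all subshifts, the collection `𝐒(Y)` of all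
subshifts contained in `Y` is a compact subset of `𝐒`; moreover, if `Y` is a shift of
finite type, then `𝐒(Y)` is also open in `𝐒`. -/
theorem subshiftsOf_isCompact_and_isOpen_of_isSFT (Y : Subshift) :
    IsCompact (SubshiftsOf Y) ∧ (Y.IsSFT → IsOpen (SubshiftsOf Y)) := by
  constructor
  · rw [isCompact_iff_ultrafilter_le_nhds]
    intro f hf
    have hSf : SubshiftsOf Y ∈ f := le_principal_iff.mp hf
    have hWn : ∀ n : ℕ, ∃ V : Set (List ℤ), {Z : Subshift | Z.lang n = V} ∈ f := by
      intro n
      have hfin : {V : Set (List ℤ) | V ⊆ Y.lang n}.Finite :=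
        (lang_finite Y n).finite_subsets
      have hmem : {V : Set (List ℤ) | V ⊆ Y.lang n} ∈ f.map (fun Z => Z.lang n) := by
        show (fun Z : Subshift => Z.lang n) ⁻¹' {V | V ⊆ Y.lang n} ∈ f
        exact Filter.mem_of_superset hSf fun Z hZ => lang_mono hZ n
      obtain ⟨V, -, hV⟩ := Ultrafilter.eq_pure_of_finite_mem hfin hmem
      refine ⟨V, ?_⟩
      have : {V} ∈ Ultrafilter.map (fun Z => Z.lang n) f := by
        rw [hV]; exact Filter.singleton_mem_pure
      exact this
    choose W hW using hWn
    have hZ : ∀ N : ℕ, ∃ Z : Subshift, Z.carrier ⊆ Y.carrier ∧ ∀ j ≤ N, Z.lang j = W j := by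
      intro N
      have hmem : (SubshiftsOf Y ∩ ⋂ j ∈ Finset.range (N + 1), {Z : Subshift | Z.lang j = W j})
          ∈ f :=
        Filter.inter_mem hSf ((Filter.biInter_finset_mem _).mpr fun j _ => hW j)
      obtain ⟨Z, hZY, hZi⟩ := Filter.nonempty_of_mem hmem
      refine ⟨Z, hZY, fun j hj => ?_⟩
      exact Set.mem_iInter₂.mp hZi j (Finset.mem_range.mpr (by omega))
    obtain ⟨X, hXY, hXl⟩ := limit_subshift Y W hZ
    refine ⟨X, hXY, ?_⟩
    have hn : (𝓝 X : Filter Subshift) =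
        ⨅ s ∈ {s | X ∈ s ∧ s ∈ {C | ∃ (X' : Subshift) (n : ℕ), C = cylinder X' n}},
          Filter.principal s :=
      TopologicalSpace.nhds_generateFrom
    rw [hn]
    refine le_iInf₂ fun s hs => ?_
    obtain ⟨hXs, X', n, rfl⟩ := hs
    rw [le_principal_iff]
    have hX' : X'.lang n = W n := by
      have hXs' : X.lang n = X'.lang n := hXs
      rw [← hXs', hXl n]
    have : cylinder X' n = {Z : Subshift | Z.lang n = W n} := by
      ext Z
      show Z.lang n = X'.lang n ↔ Z.lang n = W n
      rw [hX']
    rw [this]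
    exact hW n
  · rintro ⟨A, F, hY⟩
    set N := max 1 (F.sup List.length) with hN
    have hN1 : 0 < N := lt_of_lt_of_le one_pos (le_max_left _ _)
    have hNF : ∀ w ∈ F, w.length ≤ N := fun w hw =>
      le_trans (Finset.le_sup hw) (le_max_right _ _)
    have key : SubshiftsOf Y = ⋃ X ∈ SubshiftsOf Y, cylinder X N := by
      ext Z
      simp only [Set.mem_iUnion]
      constructor
      · exact fun h => ⟨Z, h, rfl⟩
      · rintro ⟨X, hXY, hZX⟩
        have hZXl : Z.lang N = X.lang N := hZX
        intro z hz
        have hwin : ∀ k : ℤ, window z k N ∈ Y.lang N := fun k =>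
          lang_mono hXY N (hZXl ▸ window_mem_lang Z hz k N)
        rw [hY]
        constructor
        · intro i
          obtain ⟨y, hy, hm⟩ := lang_window_elim (hwin i)
          have h0 := hm 0 hN1
          simp only [Nat.cast_zero, add_zero] at h0
          rw [hY] at hy
          rw [← h0]
          exact hy.1 0
        · intro w hw hocc
          obtain ⟨k, hk⟩ := hocc
          obtain ⟨y, hy, hm⟩ := lang_window_elim (hwin k)
          rw [hY] at hy
          apply hy.2 w hw
          refine ⟨0, fun i => ?_⟩
          have hiw : (i : ℕ) < N := lt_of_lt_of_le i.2 (hNF w hw)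
          rw [zero_add, hm i hiw]
          exact hk i
    rw [key]
    exact isOpen_biUnion fun X _ =>
      TopologicalSpace.isOpen_generateFrom_of_mem ⟨X, N, rfl⟩


end Generic
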